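/- Suppose a sequence of continuous functions u_i : Ω̄ × [0,T] → ℝ converges uniformly to a continuous function u, a sequence θ_i ∈ (0,1) decreases to 0, and there is a constant C > 0 with ∫_Ω |min(u_i(x,t), 0) + θ_i|² dx ≤ C(θ_i² + θ_i + θ_i^{1/2}) for almost every t ∈ [0,T] and every i. Then u(x,t) ≥ 0 for all (x,t) ∈ Ω̄ × [0,T]. -/

import Mathlib

open MeasureTheory Filter

/-- If continuous uᵢ → u uniformly on Ω̄ × [0,T], θᵢ ∈ (0,1) decreases to 0, and
ess sup_t ∫_Ω |min(uᵢ,0) + θᵢ|² ≤ C(θᵢ² + θᵢ + θᵢ^{1/2}), then u ≥ 0 on Ω̄ × [0,T]. -/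
theorem stmt_14 {d : ℕ} (Ω : Set (EuclideanSpace ℝ (Fin d))) (T : ℝ)
    (hΩo : IsOpen Ω) (hΩb : Bornology.IsBounded Ω) (hΩpos : 0 < volume Ω) (hT : 0 < T)
    (ui : ℕ → EuclideanSpace ℝ (Fin d) × ℝ → ℝ) (u : EuclideanSpace ℝ (Fin d) × ℝ → ℝ)
    (hui : ∀ i, ContinuousOn (ui i) (closure Ω ×ˢ Set.Icc 0 T))
    (hu : ContinuousOn u (closure Ω ×ˢ Set.Icc 0 T))
    (hconv : TendstoUniformlyOn ui u atTop (closure Ω ×ˢ Set.Icc 0 T))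
    (θ : ℕ → ℝ) (hθ : ∀ i, 0 < θ i ∧ θ i < 1) (hθanti : Antitone θ)
    (hθ0 : Tendsto θ atTop (nhds 0))
    (C : ℝ) (hC : 0 < C)
    (hbound : ∀ i, ∀ᵐ t ∂(volume.restrict (Set.Icc (0 : ℝ) T)),
      ∫ x in Ω, |min (ui i (x, t)) 0 + θ i| ^ 2
        ≤ C * ((θ i) ^ 2 + θ i + (θ i) ^ ((1 : ℝ) / 2))) :
    ∀ p ∈ closure Ω ×ˢ Set.Icc (0 : ℝ) T, 0 ≤ u p := by
  intro p hp
  by_contra hneg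
  push_neg at hneg
  set ε : ℝ := -u p with hεdef
  have hε0 : 0 < ε := by simp only [hεdef]; linarith
  obtain ⟨x₀, t₀⟩ := p
  have hx₀ : x₀ ∈ closure Ω := hp.1
  have ht₀ : t₀ ∈ Set.Icc (0:ℝ) T := hp.2
  -- continuity of u at p within the set
  have hcw : ContinuousWithinAt u (closure Ω ×ˢ Set.Icc 0 T) (x₀, t₀) := hu _ hp
  rw [Metric.continuousWithinAt_iff] at hcw
  obtain ⟨δ, hδ0, hδ⟩ := hcw (ε/2) (by positivity)
  -- spatial set S
  set S : Set (EuclideanSpace ℝ (Fin d)) := Ω ∩ Metric.ball x₀ δ with hSdef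
  have hSopen : IsOpen S := hΩo.inter Metric.isOpen_ball
  have hSne : S.Nonempty := by
    obtain ⟨y, hyΩ, hyd⟩ := Metric.mem_closure_iff.mp hx₀ δ hδ0
    exact ⟨y, hyΩ, by simpa [Metric.mem_ball, dist_comm] using hyd⟩
  have hSpos : 0 < volume S := hSopen.measure_pos volume hSne
  have hKc : IsCompact (closure Ω) :=
    Metric.isCompact_of_isClosed_isBounded isClosed_closure hΩb.closure
  have hSfin : volume S < ⊤ :=
    lt_of_le_of_lt (measure_mono (Set.inter_subset_left.trans subset_closure))
      hKc.measure_lt_top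
  set m : ℝ := (volume S).toReal with hmdef
  have hm0 : 0 < m := ENNReal.toReal_pos hSpos.ne' hSfin.ne
  -- choose i large
  have hev1 : ∀ᶠ i in atTop, ∀ q ∈ closure Ω ×ˢ Set.Icc (0:ℝ) T,
      dist (u q) (ui i q) < ε/8 :=
    Metric.tendstoUniformlyOn_iff.mp hconv (ε/8) (by positivity)
  have hev2 : ∀ᶠ i in atTop, θ i < ε/8 := hθ0.eventually_lt_const (by positivity)
  have hrhs : Tendsto (fun i => C * ((θ i) ^ 2 + θ i + (θ i) ^ ((1:ℝ)/2)))
      atTop (nhds 0) := by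
    have h1 : Tendsto (fun i => (θ i) ^ ((1:ℝ)/2)) atTop (nhds 0) := by
      have := (Real.continuousAt_rpow_const 0 ((1:ℝ)/2)
        (Or.inr (by norm_num))).tendsto.comp hθ0
      simpa [Function.comp_def, Real.zero_rpow (by norm_num : ((1:ℝ)/2) ≠ 0)] using this
    have h2 : Tendsto (fun i => (θ i) ^ 2 + θ i + (θ i) ^ ((1:ℝ)/2)) atTop (nhds 0) := by
      have := ((hθ0.pow 2).add hθ0).add h1
      simpa using this
    simpa using (tendsto_const_nhds.mul h2 : Tendsto _ atTop (nhds (C * 0)))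
  have hev3 : ∀ᶠ i in atTop, C * ((θ i) ^ 2 + θ i + (θ i) ^ ((1:ℝ)/2)) < (ε/4)^2 * m :=
    hrhs.eventually_lt_const (by positivity)
  obtain ⟨i, h1, h2, h3⟩ := (hev1.and (hev2.and hev3)).exists
  -- choose time t₁
  set a : ℝ := max 0 (t₀ - δ/2) with hadef
  set b : ℝ := min T (t₀ + δ/2) with hbdef
  have hab : a < b := by
    rw [hadef, hbdef, max_lt_iff, lt_min_iff, lt_min_iff]
    refine ⟨⟨hT, by linarith [ht₀.1]⟩, ⟨by linarith [ht₀.2], by linarith⟩⟩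
  have hIoosub : Set.Ioo a b ⊆ Set.Icc (0:ℝ) T := fun t ht =>
    ⟨le_trans (le_max_left _ _) ht.1.le, le_trans ht.2.le (min_le_left _ _)⟩
  obtain ⟨t₁, ht₁Ioo, ht₁P⟩ : ∃ t₁ ∈ Set.Ioo a b,
      ∫ x in Ω, |min (ui i (x, t₁)) 0 + θ i| ^ 2
        ≤ C * ((θ i) ^ 2 + θ i + (θ i) ^ ((1:ℝ)/2)) := by
    by_contra hcon
    push_neg at hcon
    have hsub : Set.Ioo a b ⊆ {t | ¬ (∫ x in Ω, |min (ui i (x, t)) 0 + θ i| ^ 2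
        ≤ C * ((θ i) ^ 2 + θ i + (θ i) ^ ((1:ℝ)/2)))} ∩ Set.Icc (0:ℝ) T := by
      intro t ht
      exact ⟨fun hle => absurd hle (not_le.mpr (hcon t ht)), hIoosub ht⟩
    have h0 : volume ({t | ¬ (∫ x in Ω, |min (ui i (x, t)) 0 + θ i| ^ 2
        ≤ C * ((θ i) ^ 2 + θ i + (θ i) ^ ((1:ℝ)/2)))} ∩ Set.Icc (0:ℝ) T) = 0 := by
      have := hbound i
      rw [ae_iff, Measure.restrict_apply' measurableSet_Icc] at this
      exact this
    have : volume (Set.Ioo a b) = 0 := le_antisymm (h0 ▸ measure_mono hsub) zero_le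
    simp [Real.volume_Ioo, hab] at this
    linarith [this]
  have ht₁Icc : t₁ ∈ Set.Icc (0:ℝ) T := hIoosub ht₁Ioo
  have ht₁d : dist t₁ t₀ < δ := by
    rw [Real.dist_eq, abs_lt]
    constructor
    · have : t₀ - δ/2 ≤ a := le_max_right _ _
      linarith [ht₁Ioo.1, hδ0]
    · have : b ≤ t₀ + δ/2 := min_le_right _ _
      linarith [ht₁Ioo.2, hδ0]
  -- pointwise lower bound on S
  have hpt : ∀ y ∈ S, ((ε/4)^2 : ℝ) ≤ |min (ui i (y, t₁)) 0 + θ i| ^ 2 := by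
    intro y hy
    have hyc : y ∈ closure Ω := subset_closure hy.1
    have hmem : (y, t₁) ∈ closure Ω ×ˢ Set.Icc (0:ℝ) T := ⟨hyc, ht₁Icc⟩
    have hdist : dist (y, t₁) (x₀, t₀) < δ := by
      rw [Prod.dist_eq]
      exact max_lt (by simpa [Metric.mem_ball] using hy.2) ht₁d
    have hu1 : u (y, t₁) < -ε/2 := by
      have := hδ hmem hdist
      rw [Real.dist_eq, abs_lt] at this
      have : u (y, t₁) - u (x₀, t₀) < ε/2 := this.2
      have hup : u (x₀, t₀) = -ε := by simp [hεdef]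
      linarith
    have hui1 : ui i (y, t₁) < -3*ε/8 := by
      have := h1 _ hmem
      rw [Real.dist_eq, abs_lt] at this
      linarith [this.1]
    have hmin : min (ui i (y, t₁)) 0 = ui i (y, t₁) := min_eq_left (by linarith)
    have hθi := (hθ i).1
    have hw : min (ui i (y, t₁)) 0 + θ i < -ε/4 := by
      rw [hmin]; linarith
    have habs : ε/4 ≤ |min (ui i (y, t₁)) 0 + θ i| := by
      rw [abs_of_neg (by linarith)]
      linarith
    exact pow_le_pow_left₀ (by positivity) habs 2
  -- integrability
  have hgc : ContinuousOn (fun x : EuclideanSpace ℝ (Fin d) => |min (ui i (x, t₁)) 0 + θ i| ^ 2) (closure Ω) := by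
    have hc1 : ContinuousOn (fun x => ui i (x, t₁)) (closure Ω) := by
      apply (hui i).comp (Continuous.continuousOn (by fun_prop))
      intro x hx
      exact ⟨hx, ht₁Icc⟩
    exact (((hc1.inf continuousOn_const).add continuousOn_const).abs.pow 2)
  have hgint : IntegrableOn (fun x : EuclideanSpace ℝ (Fin d) => |min (ui i (x, t₁)) 0 + θ i| ^ 2) Ω := (hgc.integrableOn_compact hKc).mono_set subset_closure
  have hgnn : 0 ≤ᵐ[volume.restrict Ω] (fun x : EuclideanSpace ℝ (Fin d) => |min (ui i (x, t₁)) 0 + θ i| ^ 2) := by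
    filter_upwards with x
    positivity
  have hle1 : (ε/4)^2 * m ≤ ∫ x in S, |min (ui i (x, t₁)) 0 + θ i| ^ 2 := by
    have hci : IntegrableOn (fun _ => ((ε/4)^2 : ℝ)) S :=
      integrableOn_const hSfin.ne
    have := setIntegral_mono_on hci (hgint.mono_set Set.inter_subset_left)
      hSopen.measurableSet hpt
    rwa [setIntegral_const, smul_eq_mul, mul_comm] at this
  have hle2 : ∫ x in S, |min (ui i (x, t₁)) 0 + θ i| ^ 2 ≤ ∫ x in Ω, |min (ui i (x, t₁)) 0 + θ i| ^ 2 :=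
    setIntegral_mono_set hgint hgnn (HasSubset.Subset.eventuallyLE Set.inter_subset_left)
  have hfinal : (∫ x in Ω, |min (ui i (x, t₁)) 0 + θ i| ^ 2) ≤ C * ((θ i) ^ 2 + θ i + (θ i) ^ ((1:ℝ)/2)) := ht₁P
  linarith
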